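/- Let p be a complex polynomial of degree 4 with four distinct roots z₀, z₁, z₂, z₃ such that z₀ lies in the interior of the convex hull (triangle) of z₁, z₂, z₃. Then among the three open triangles with vertices (z₀,z₁,z₂), (z₀,z₂,z₃), (z₀,z₃,z₁), at least one contains no root of p'. -/

import Mathlib

open Polynomial Complex Real

noncomputable def crs (U V : ℂ) : ℝ := U.re * V.im - U.im * V.re

lemma crs_self (U : ℂ) : crs U U = 0 := by simp [crs]; ring

lemma crs_anti (U V : ℂ) : crs U V = - crs V U := by simp [crs]; ring

lemma crs_neg_left (U V : ℂ) : crs (-U) V = - crs U V := by simp [crs]; ring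

lemma crs_comb (U V W : ℂ) (s t : ℝ) :
    crs U ((s : ℂ) * V + (t : ℂ) * W) = s * crs U V + t * crs U W := by
  simp [crs, Complex.add_re, Complex.add_im, Complex.mul_re, Complex.mul_im,
    Complex.ofReal_re, Complex.ofReal_im]
  ring

lemma crs_conj (U V : ℂ) : crs ((starRingEnd ℂ) U) ((starRingEnd ℂ) V) = - crs U V := by
  simp [crs, Complex.conj_re, Complex.conj_im]
  ring

lemma crs_linear (U : ℂ) : IsLinearMap ℝ (fun v : ℂ => crs U v) := by
  constructor
  · intro a b; simp [crs]; ring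
  · intro r a; simp [crs, Complex.smul_re, Complex.smul_im]; ring

lemma interior_pos (q U : ℂ) (hU : U ≠ 0) (S : Set ℂ)
    (hS : ∀ v ∈ S, 0 ≤ crs U (v - q)) {w : ℂ} (hw : w ∈ interior S) :
    0 < crs U (w - q) := by
  have hwS : w ∈ S := interior_subset hw
  rcases lt_or_eq_of_le (hS w hwS) with h | h
  · exact h
  · exfalso
    rw [mem_interior_iff_mem_nhds, Metric.mem_nhds_iff] at hw
    obtain ⟨ε, hε, hball⟩ := hw
    have hUa : 0 < ‖U‖ := by simpa using hU
    set t : ℝ := ε / (2 * ‖U‖) with ht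
    have htpos : 0 < t := by positivity
    have hmem : w - (t : ℂ) * (Complex.I * U) ∈ S := by
      apply hball
      simp only [Metric.mem_ball, Complex.dist_eq]
      have : w - (t : ℂ) * (Complex.I * U) - w = -((t : ℂ) * (Complex.I * U)) := by ring
      rw [this, norm_neg, norm_mul, norm_mul, Complex.norm_real, Real.norm_eq_abs, Complex.norm_I,
        abs_of_pos htpos]
      rw [ht]; rw [one_mul]
      rw [div_mul_eq_mul_div]
      rw [div_lt_iff₀ (by positivity)]
      nlinarith
    have := hS _ hmem
    have hcalc : crs U (w - (t : ℂ) * (Complex.I * U) - q)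
        = crs U (w - q) - t * Complex.normSq U := by
      simp [crs, Complex.normSq_apply]; ring
    rw [hcalc, ← h] at this
    have : t * Complex.normSq U ≤ 0 := by linarith
    nlinarith [Complex.normSq_pos.mpr hU, htpos]

lemma interior_tri_pos (q U a₁ a₂ a₃ : ℂ) (hU : U ≠ 0)
    (h1 : 0 ≤ crs U (a₁ - q)) (h2 : 0 ≤ crs U (a₂ - q)) (h3 : 0 ≤ crs U (a₃ - q))
    {w : ℂ} (hw : w ∈ interior (convexHull ℝ ({a₁, a₂, a₃} : Set ℂ))) :
    0 < crs U (w - q) := by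
  apply interior_pos q U hU _ _ hw
  have hconv : Convex ℝ {v : ℂ | crs U (q : ℂ) ≤ crs U v} :=
    convex_halfSpace_ge (crs_linear U) _
  have hsub : convexHull ℝ ({a₁, a₂, a₃} : Set ℂ) ⊆ {v : ℂ | crs U q ≤ crs U v} := by
    apply convexHull_min _ hconv
    have e : ∀ v : ℂ, crs U (v - q) = crs U v - crs U q := by
      intro v; simp [crs]; ring
    rintro v (rfl | rfl | rfl) <;> simp only [Set.mem_setOf_eq] <;>
      { have := e v; linarith }
  intro v hv
  have := hsub hv
  simp only [Set.mem_setOf_eq] at this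
  have e : crs U (v - q) = crs U v - crs U q := by simp [crs]; ring
  linarith

lemma coords (q a b : ℂ) (hD : crs (a - q) (b - q) ≠ 0) {w : ℂ}
    (hw : w ∈ interior (convexHull ℝ ({q, a, b} : Set ℂ))) :
    ∃ s t : ℝ, 0 < s ∧ 0 < t ∧ w - q = (s : ℂ) * (a - q) + (t : ℂ) * (b - q) := by
  have hAne : a - q ≠ 0 := by rintro h; rw [h] at hD; simp [crs] at hD
  have hBne : b - q ≠ 0 := by rintro h; rw [h] at hD; simp [crs] at hD
  have hzero : ∀ U : ℂ, crs U (q - q) = 0 := by intro U; simp [crs]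
  have hsv : 0 < crs (w - q) (b - q) / crs (a - q) (b - q) ∧
      0 < crs (a - q) (w - q) / crs (a - q) (b - q) := by
    rcases hD.lt_or_gt with hneg | hpos
    · have h1 : 0 < crs (b - q) (w - q) :=
        interior_tri_pos q (b - q) q a b hBne (by rw [hzero]) (by rw [crs_anti]; linarith)
          (by rw [crs_self]) hw
      have h2 : 0 < crs (-(a - q)) (w - q) :=
        interior_tri_pos q (-(a - q)) q a b (neg_ne_zero.mpr hAne) (by rw [hzero])
          (by rw [crs_neg_left, crs_self]; norm_num) (by rw [crs_neg_left]; linarith) hw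
      rw [crs_neg_left] at h2
      constructor
      · apply div_pos_of_neg_of_neg _ hneg; rw [crs_anti]; linarith
      · exact div_pos_of_neg_of_neg (by linarith) hneg
    · have h1 : 0 < crs (-(b - q)) (w - q) :=
        interior_tri_pos q (-(b - q)) q a b (neg_ne_zero.mpr hBne) (by rw [hzero])
          (by rw [crs_neg_left, crs_anti]; linarith) (by rw [crs_neg_left, crs_self]; norm_num) hw
      rw [crs_neg_left] at h1
      have h2 : 0 < crs (a - q) (w - q) :=
        interior_tri_pos q (a - q) q a b hAne (by rw [hzero]) (by rw [crs_self]) (by linarith) hw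
      constructor
      · apply div_pos _ hpos; rw [crs_anti]; linarith
      · exact div_pos h2 hpos
  refine ⟨_, _, hsv.1, hsv.2, ?_⟩
  have hkey : (crs (a - q) (b - q) : ℂ) * (w - q)
      = (crs (w - q) (b - q) : ℂ) * (a - q) + (crs (a - q) (w - q) : ℂ) * (b - q) := by
    simp only [crs, Complex.ext_iff, Complex.mul_re, Complex.mul_im, Complex.add_re,
      Complex.add_im, Complex.ofReal_re, Complex.ofReal_im, Complex.sub_re, Complex.sub_im]
    constructor <;> ring
  have hD' : (crs (a - q) (b - q) : ℂ) ≠ 0 := by exact_mod_cast hD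
  push_cast
  field_simp
  linear_combination hkey

lemma arg_pos_of_im {z : ℂ} (h : 0 < z.im) : 0 < Complex.arg z := by
  rcases lt_or_eq_of_le (Complex.arg_nonneg_iff.mpr h.le) with h' | h'
  · exact h'
  · exact absurd (Complex.arg_eq_zero_iff.mp h'.symm).2 (by linarith)

lemma arg_lt_pi_of_im {z : ℂ} (h : 0 < z.im) : Complex.arg z < π :=
  Complex.arg_lt_pi_iff.mpr (Or.inr h.ne')

lemma arg_lt_arg {f g : ℂ} (hf : 0 < f.im) (hg : 0 < g.im) (hq : (f / g).im < 0) :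
    Complex.arg f < Complex.arg g := by
  have hfne : f ≠ 0 := by rintro rfl; simp at hf
  have hgne : g ≠ 0 := by rintro rfl; simp at hg
  have hfgne : f / g ≠ 0 := by rintro h; rw [h] at hq; simp at hq
  have hmul : f / g * g = f := div_mul_cancel₀ f hgne
  have hangle : ((Complex.arg (f / g) + Complex.arg g : ℝ) : Real.Angle)
      = (Complex.arg f : Real.Angle) := by
    rw [Real.Angle.coe_add, ← Complex.arg_mul_coe_angle hfgne hgne, hmul]
  obtain ⟨k, hk⟩ := Real.Angle.angle_eq_iff_two_pi_dvd_sub.mp hangle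
  have b1 : Complex.arg (f / g) < 0 := Complex.arg_neg_iff.mpr hq
  have b2 : -π < Complex.arg (f / g) := Complex.neg_pi_lt_arg _
  have b3 : 0 < Complex.arg g := arg_pos_of_im hg
  have b4 : Complex.arg g < π := arg_lt_pi_of_im hg
  have b5 : 0 < Complex.arg f := arg_pos_of_im hf
  have b6 : Complex.arg f < π := arg_lt_pi_of_im hf
  have hpi := Real.pi_pos
  have hk0 : k = 0 := by
    rcases lt_trichotomy k 0 with h | h | h
    · have : (k : ℝ) ≤ -1 := by exact_mod_cast Int.le_of_lt_add_one (by omega : k < -1 + 1)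
      nlinarith
    · exact h
    · have : (1 : ℝ) ≤ (k : ℝ) := by exact_mod_cast h
      nlinarith
  rw [hk0] at hk
  simp at hk
  linarith

lemma sum_arg_eq_two_pi {x y z : ℂ} (hx : 0 < x.im) (hy : 0 < y.im) (hz : 0 < z.im)
    (hxyz : x * y * z = 1) :
    Complex.arg x + Complex.arg y + Complex.arg z = 2 * π := by
  have hxne : x ≠ 0 := by rintro rfl; simp at hx
  have hyne : y ≠ 0 := by rintro rfl; simp at hy
  have hzne : z ≠ 0 := by rintro rfl; simp at hz
  have hangle : ((Complex.arg x + Complex.arg y + Complex.arg z : ℝ) : Real.Angle)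
      = ((0 : ℝ) : Real.Angle) := by
    rw [Real.Angle.coe_add, Real.Angle.coe_add, ← Complex.arg_mul_coe_angle hxne hyne,
      ← Complex.arg_mul_coe_angle (mul_ne_zero hxne hyne) hzne, hxyz]
    norm_num [Complex.arg_one]
  obtain ⟨k, hk⟩ := Real.Angle.angle_eq_iff_two_pi_dvd_sub.mp hangle
  have hpi := Real.pi_pos
  have b1 := arg_pos_of_im hx; have b2 := arg_lt_pi_of_im hx
  have b3 := arg_pos_of_im hy; have b4 := arg_lt_pi_of_im hy
  have b5 := arg_pos_of_im hz; have b6 := arg_lt_pi_of_im hz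
  have hk1 : k = 1 := by
    rcases lt_trichotomy k 1 with h | h | h
    · exfalso
      have : (k : ℝ) ≤ 0 := by exact_mod_cast Int.le_of_lt_add_one (by omega : k < 0 + 1)
      nlinarith
    · exact h
    · exfalso
      have : (2 : ℝ) ≤ (k : ℝ) := by exact_mod_cast h
      nlinarith
  rw [hk1] at hk
  push_cast at hk
  linarith

lemma div_im_pos_of_crs {A B : ℂ} (hA : A ≠ 0) (h : 0 < crs A B) : 0 < (B / A).im := by
  have h2 : 0 < Complex.normSq A := Complex.normSq_pos.mpr hA
  have : (B / A).im = crs A B / Complex.normSq A := by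
    rw [Complex.div_im]; unfold crs; rw [Complex.normSq_apply]; ring
  rw [this]
  exact div_pos h h2

lemma core (A B C u₁ u₂ u₃ : ℂ) (s₁ t₁ s₂ t₂ s₃ t₃ : ℝ)
    (hs₁ : 0 < s₁) (ht₁ : 0 < t₁) (hs₂ : 0 < s₂) (ht₂ : 0 < t₂) (hs₃ : 0 < s₃) (ht₃ : 0 < t₃)
    (hAB : 0 < crs A B) (hBC : 0 < crs B C) (hCA : 0 < crs C A)
    (h₁ : u₁ = (s₁ : ℂ) * A + (t₁ : ℂ) * B)
    (h₂ : u₂ = (s₂ : ℂ) * B + (t₂ : ℂ) * C)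
    (h₃ : u₃ = (s₃ : ℂ) * C + (t₃ : ℂ) * A)
    (hprod : A * B * C = 4 * (u₁ * u₂ * u₃)) : False := by
  have hAne : A ≠ 0 := by rintro rfl; simp [crs] at hAB
  have hBne : B ≠ 0 := by rintro rfl; simp [crs] at hBC
  have hCne : C ≠ 0 := by rintro rfl; simp [crs] at hCA
  obtain ⟨x, hx⟩ : ∃ x : ℂ, x = B / A := ⟨_, rfl⟩
  obtain ⟨y, hy⟩ : ∃ y : ℂ, y = C / B := ⟨_, rfl⟩
  obtain ⟨z, hz⟩ : ∃ z : ℂ, z = A / C := ⟨_, rfl⟩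
  have hxim : 0 < x.im := hx ▸ div_im_pos_of_crs hAne hAB
  have hyim : 0 < y.im := hy ▸ div_im_pos_of_crs hBne hBC
  have hzim : 0 < z.im := hz ▸ div_im_pos_of_crs hCne hCA
  have hxyz : x * y * z = 1 := by rw [hx, hy, hz]; field_simp
  obtain ⟨f₁, hf₁⟩ : ∃ f : ℂ, f = (s₁ : ℂ) + (t₁ : ℂ) * x := ⟨_, rfl⟩
  obtain ⟨f₂, hf₂⟩ : ∃ f : ℂ, f = (s₂ : ℂ) + (t₂ : ℂ) * y := ⟨_, rfl⟩
  obtain ⟨f₃, hf₃⟩ : ∃ f : ℂ, f = (s₃ : ℂ) + (t₃ : ℂ) * z := ⟨_, rfl⟩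
  have him : ∀ (s t : ℝ) (g : ℂ), ((s : ℂ) + (t : ℂ) * g).im = t * g.im := by
    intro s t g
    rw [Complex.add_im, Complex.ofReal_im, Complex.im_ofReal_mul]
    ring
  have hf₁im : 0 < f₁.im := by rw [hf₁, him]; exact mul_pos ht₁ hxim
  have hf₂im : 0 < f₂.im := by rw [hf₂, him]; exact mul_pos ht₂ hyim
  have hf₃im : 0 < f₃.im := by rw [hf₃, him]; exact mul_pos ht₃ hzim
  have hxne : x ≠ 0 := by rintro h; rw [h] at hxim; simp at hxim
  have hyne : y ≠ 0 := by rintro h; rw [h] at hyim; simp at hyim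
  have hzne : z ≠ 0 := by rintro h; rw [h] at hzim; simp at hzim
  have hdiv : ∀ (s t : ℝ) (g : ℂ), g ≠ 0 → (((s : ℂ) + (t : ℂ) * g) / g).im = s * g⁻¹.im := by
    intro s t g hg
    rw [add_div, mul_div_assoc, div_self hg, mul_one, div_eq_mul_inv, Complex.add_im,
      Complex.im_ofReal_mul, Complex.ofReal_im]
    ring
  have hinv : ∀ g : ℂ, g ≠ 0 → 0 < g.im → g⁻¹.im < 0 := by
    intro g hg him
    rw [Complex.inv_im]
    exact div_neg_of_neg_of_pos (by linarith) (Complex.normSq_pos.mpr hg)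
  have hq₁ : (f₁ / x).im < 0 := by
    rw [hf₁, hdiv s₁ t₁ x hxne]
    exact mul_neg_of_pos_of_neg hs₁ (hinv x hxne hxim)
  have hq₂ : (f₂ / y).im < 0 := by
    rw [hf₂, hdiv s₂ t₂ y hyne]
    exact mul_neg_of_pos_of_neg hs₂ (hinv y hyne hyim)
  have hq₃ : (f₃ / z).im < 0 := by
    rw [hf₃, hdiv s₃ t₃ z hzne]
    exact mul_neg_of_pos_of_neg hs₃ (hinv z hzne hzim)
  have hlt₁ : Complex.arg f₁ < Complex.arg x := arg_lt_arg hf₁im hxim hq₁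
  have hlt₂ : Complex.arg f₂ < Complex.arg y := arg_lt_arg hf₂im hyim hq₂
  have hlt₃ : Complex.arg f₃ < Complex.arg z := arg_lt_arg hf₃im hzim hq₃
  have hsumg : Complex.arg x + Complex.arg y + Complex.arg z = 2 * π :=
    sum_arg_eq_two_pi hxim hyim hzim hxyz
  have hABC : A * B * C ≠ 0 := mul_ne_zero (mul_ne_zero hAne hBne) hCne
  have hu : u₁ * u₂ * u₃ ≠ 0 := by
    intro h; rw [h, mul_zero] at hprod; exact hABC hprod
  have hfprod : f₁ * f₂ * f₃ = (((4 : ℝ)⁻¹ : ℝ) : ℂ) := by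
    have he : f₁ * f₂ * f₃ = (u₁ * u₂ * u₃) / (A * B * C) := by
      rw [hf₁, hf₂, hf₃, hx, hy, hz, h₁, h₂, h₃]
      field_simp
    rw [he, hprod]
    push_cast
    rw [mul_comm (4 : ℂ) (u₁ * u₂ * u₃), ← div_div, div_self hu, one_div]
  have hf₁ne : f₁ ≠ 0 := by rintro h; rw [h] at hf₁im; simp at hf₁im
  have hf₂ne : f₂ ≠ 0 := by rintro h; rw [h] at hf₂im; simp at hf₂im
  have hf₃ne : f₃ ≠ 0 := by rintro h; rw [h] at hf₃im; simp at hf₃im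
  have hargprod : ((Complex.arg f₁ + Complex.arg f₂ + Complex.arg f₃ : ℝ) : Real.Angle)
      = ((0 : ℝ) : Real.Angle) := by
    rw [Real.Angle.coe_add, Real.Angle.coe_add, ← Complex.arg_mul_coe_angle hf₁ne hf₂ne,
      ← Complex.arg_mul_coe_angle (mul_ne_zero hf₁ne hf₂ne) hf₃ne, hfprod,
      Complex.arg_ofReal_of_nonneg (by norm_num : (0:ℝ) ≤ (4:ℝ)⁻¹)]
  obtain ⟨k, hk⟩ := Real.Angle.angle_eq_iff_two_pi_dvd_sub.mp hargprod
  have hpi := Real.pi_pos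
  have b1 := arg_pos_of_im hf₁im
  have b2 := arg_pos_of_im hf₂im
  have b3 := arg_pos_of_im hf₃im
  rcases lt_trichotomy k 1 with h | h | h
  · have hk0 : (k : ℝ) ≤ 0 := by exact_mod_cast Int.le_of_lt_add_one (by omega : k < 0 + 1)
    nlinarith
  · rw [h] at hk; push_cast at hk; linarith
  · have hk2 : (2 : ℝ) ≤ (k : ℝ) := by exact_mod_cast h
    nlinarith [arg_lt_pi_of_im hf₁im, arg_lt_pi_of_im hf₂im, arg_lt_pi_of_im hf₃im]

lemma key_prod (z₀ z₁ z₂ z₃ w₁ w₂ w₃ : ℂ) (hw12 : w₁ ≠ w₂) (hw13 : w₁ ≠ w₃) (hw23 : w₂ ≠ w₃)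
    (p : ℂ[X]) (hp : p = (X - C z₀) * (X - C z₁) * (X - C z₂) * (X - C z₃))
    (e₁ : eval w₁ (derivative p) = 0) (e₂ : eval w₂ (derivative p) = 0)
    (e₃ : eval w₃ (derivative p) = 0) :
    (z₀ - z₁) * (z₀ - z₂) * (z₀ - z₃) = 4 * ((z₀ - w₁) * (z₀ - w₂) * (z₀ - w₃)) := by
  have hmonic : p.Monic := by
    rw [hp]
    exact (((monic_X_sub_C z₀).mul (monic_X_sub_C z₁)).mul (monic_X_sub_C z₂)).mul
      (monic_X_sub_C z₃)
  have hdeg : p.natDegree = 4 := by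
    rw [hp, Monic.natDegree_mul (((monic_X_sub_C z₀).mul (monic_X_sub_C z₁)).mul
      (monic_X_sub_C z₂)) (monic_X_sub_C z₃),
      Monic.natDegree_mul ((monic_X_sub_C z₀).mul (monic_X_sub_C z₁)) (monic_X_sub_C z₂),
      Monic.natDegree_mul (monic_X_sub_C z₀) (monic_X_sub_C z₁)]
    simp [natDegree_X_sub_C]
  have hc4 : p.coeff 4 = 1 := by
    have := hmonic.coeff_natDegree
    rwa [hdeg] at this
  have hq3 : (derivative p).coeff 3 = 4 := by
    rw [coeff_derivative, hc4]
    norm_num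
  have hqne : derivative p ≠ 0 := fun h => by simp [h] at hq3
  have hqdeg : (derivative p).natDegree = 3 := by
    refine le_antisymm ?_ (le_natDegree_of_ne_zero (by rw [hq3]; norm_num))
    have := natDegree_derivative_le p
    omega
  have hlead : (derivative p).leadingCoeff = 4 := by
    rw [leadingCoeff, hqdeg, hq3]
  have hcard : (derivative p).roots.card = 3 := by
    rw [← hqdeg]
    exact (splits_iff_card_roots.mp (IsAlgClosed.splits (derivative p)))
  have hnodup : ({w₁, w₂, w₃} : Multiset ℂ).Nodup := by
    simp [hw12, hw13, hw23]
  have hle : ({w₁, w₂, w₃} : Multiset ℂ) ≤ (derivative p).roots := by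
    rw [Multiset.le_iff_subset hnodup]
    intro a ha
    simp only [Multiset.mem_cons, Multiset.mem_singleton, Multiset.insert_eq_cons] at ha
    rw [mem_roots hqne]
    rcases ha with rfl | rfl | rfl
    exacts [e₁, e₂, e₃]
  have hroots : ({w₁, w₂, w₃} : Multiset ℂ) = (derivative p).roots :=
    Multiset.eq_of_le_of_card_le hle (by rw [hcard]; simp)
  have hfact : C (4 : ℂ) * ((X - C w₁) * (X - C w₂) * (X - C w₃)) = derivative p := by
    have h := C_leadingCoeff_mul_prod_multiset_X_sub_C (p := derivative p)
      (by rw [hcard, hqdeg])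
    rw [hlead, ← hroots] at h
    rw [← h]
    simp [Multiset.insert_eq_cons, Multiset.map_cons, Multiset.prod_cons]
    ring
  have heval : eval z₀ (derivative p) = (z₀ - z₁) * (z₀ - z₂) * (z₀ - z₃) := by
    rw [hp]
    simp [derivative_mul, derivative_X_sub_C]
  have heval2 : eval z₀ (derivative p) = 4 * ((z₀ - w₁) * (z₀ - w₂) * (z₀ - w₃)) := by
    rw [← hfact]
    simp
  rw [← heval, heval2]

/-- For a quartic `p` with four distinct roots `z₀, z₁, z₂, z₃` such that `z₀`
lies in the interior of the triangle `conv{z₁, z₂, z₃}`, at least one of the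
three open sub-triangles `(z₀,z₁,z₂)`, `(z₀,z₂,z₃)`, `(z₀,z₃,z₁)` contains no
root of `p'`. -/
theorem exists_subtriangle_without_critical_point (z₀ z₁ z₂ z₃ : ℂ)
    (hd01 : z₀ ≠ z₁) (hd02 : z₀ ≠ z₂) (hd03 : z₀ ≠ z₃)
    (hd12 : z₁ ≠ z₂) (hd13 : z₁ ≠ z₃) (hd23 : z₂ ≠ z₃)
    (hint : z₀ ∈ interior (convexHull ℝ ({z₁, z₂, z₃} : Set ℂ)))
    (p : ℂ[X]) (hp : p = (X - C z₀) * (X - C z₁) * (X - C z₂) * (X - C z₃)) :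
    (∀ w, eval w (derivative p) = 0 →
        w ∉ interior (convexHull ℝ ({z₀, z₁, z₂} : Set ℂ))) ∨
    (∀ w, eval w (derivative p) = 0 →
        w ∉ interior (convexHull ℝ ({z₀, z₂, z₃} : Set ℂ))) ∨
    (∀ w, eval w (derivative p) = 0 →
        w ∉ interior (convexHull ℝ ({z₀, z₃, z₁} : Set ℂ))) := by
  by_contra hcon
  push_neg at hcon
  obtain ⟨⟨w₁, he₁, hw₁⟩, ⟨w₂, he₂, hw₂⟩, ⟨w₃, he₃, hw₃⟩⟩ := hcon
  -- orientation facts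
  have horient :
      (0 < crs (z₁ - z₀) (z₂ - z₀) ∧ 0 < crs (z₂ - z₀) (z₃ - z₀) ∧
        0 < crs (z₃ - z₀) (z₁ - z₀)) ∨
      (crs (z₁ - z₀) (z₂ - z₀) < 0 ∧ crs (z₂ - z₀) (z₃ - z₀) < 0 ∧
        crs (z₃ - z₀) (z₁ - z₀) < 0) := by
    have i12 : ∀ v : ℂ, crs (z₂ - z₁) (v - z₁) = crs (z₁ - z₀) (z₂ - z₀)
        + crs (z₂ - z₀) (v - z₀) + crs (v - z₀) (z₁ - z₀) := by
      intro v; simp [crs, Complex.sub_re, Complex.sub_im]; ring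
    have i23 : ∀ v : ℂ, crs (z₃ - z₂) (v - z₂) = crs (z₂ - z₀) (z₃ - z₀)
        + crs (z₃ - z₀) (v - z₀) + crs (v - z₀) (z₂ - z₀) := by
      intro v; simp [crs, Complex.sub_re, Complex.sub_im]; ring
    have i31 : ∀ v : ℂ, crs (z₁ - z₃) (v - z₃) = crs (z₃ - z₀) (z₁ - z₀)
        + crs (z₁ - z₀) (v - z₀) + crs (v - z₀) (z₃ - z₀) := by
      intro v; simp [crs, Complex.sub_re, Complex.sub_im]; ring
    -- value of the side functional at the opposite vertex is the full "area" G
    have hG12 : crs (z₂ - z₁) (z₃ - z₁) = crs (z₁ - z₀) (z₂ - z₀)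
        + crs (z₂ - z₀) (z₃ - z₀) + crs (z₃ - z₀) (z₁ - z₀) := by
      simp [crs, Complex.sub_re, Complex.sub_im]; ring
    have hG23 : crs (z₃ - z₂) (z₁ - z₂) = crs (z₁ - z₀) (z₂ - z₀)
        + crs (z₂ - z₀) (z₃ - z₀) + crs (z₃ - z₀) (z₁ - z₀) := by
      simp [crs, Complex.sub_re, Complex.sub_im]; ring
    have hG31 : crs (z₁ - z₃) (z₂ - z₃) = crs (z₁ - z₀) (z₂ - z₀)
        + crs (z₂ - z₀) (z₃ - z₀) + crs (z₃ - z₀) (z₁ - z₀) := by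
      simp [crs, Complex.sub_re, Complex.sub_im]; ring
    have hz21 : z₂ - z₁ ≠ 0 := sub_ne_zero.mpr hd12.symm
    have hz32 : z₃ - z₂ ≠ 0 := sub_ne_zero.mpr hd23.symm
    have hz13 : z₁ - z₃ ≠ 0 := sub_ne_zero.mpr hd13
    have hval12 : crs (z₂ - z₁) (z₀ - z₁) = crs (z₁ - z₀) (z₂ - z₀) := by
      simp [crs, Complex.sub_re, Complex.sub_im]; ring
    have hval23 : crs (z₃ - z₂) (z₀ - z₂) = crs (z₂ - z₀) (z₃ - z₀) := by
      simp [crs, Complex.sub_re, Complex.sub_im]; ring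
    have hval31 : crs (z₁ - z₃) (z₀ - z₃) = crs (z₃ - z₀) (z₁ - z₀) := by
      simp [crs, Complex.sub_re, Complex.sub_im]; ring
    rcases le_or_gt 0 (crs (z₁ - z₀) (z₂ - z₀) + crs (z₂ - z₀) (z₃ - z₀)
        + crs (z₃ - z₀) (z₁ - z₀)) with hGpos | hGneg
    · left
      refine ⟨?_, ?_, ?_⟩
      · have := interior_tri_pos z₁ (z₂ - z₁) z₁ z₂ z₃ hz21
          (by rw [sub_self]; simp [crs]) (by rw [crs_self])
          (by rw [hG12]; exact hGpos) hint
        rwa [hval12] at this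
      · have := interior_tri_pos z₂ (z₃ - z₂) z₁ z₂ z₃ hz32
          (by rw [hG23]; exact hGpos) (by rw [sub_self]; simp [crs])
          (by rw [crs_self]) hint
        rwa [hval23] at this
      · have := interior_tri_pos z₃ (z₁ - z₃) z₁ z₂ z₃ hz13
          (by rw [crs_self]) (by rw [hG31]; exact hGpos)
          (by rw [sub_self]; simp [crs]) hint
        rwa [hval31] at this
    · right
      refine ⟨?_, ?_, ?_⟩
      · have := interior_tri_pos z₁ (-(z₂ - z₁)) z₁ z₂ z₃ (neg_ne_zero.mpr hz21)
          (by rw [sub_self]; simp [crs]) (by rw [crs_neg_left, crs_self]; norm_num)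
          (by rw [crs_neg_left, hG12]; linarith) hint
        rw [crs_neg_left, hval12] at this
        linarith
      · have := interior_tri_pos z₂ (-(z₃ - z₂)) z₁ z₂ z₃ (neg_ne_zero.mpr hz32)
          (by rw [crs_neg_left, hG23]; linarith) (by rw [sub_self]; simp [crs])
          (by rw [crs_neg_left, crs_self]; norm_num) hint
        rw [crs_neg_left, hval23] at this
        linarith
      · have := interior_tri_pos z₃ (-(z₁ - z₃)) z₁ z₂ z₃ (neg_ne_zero.mpr hz13)
          (by rw [crs_neg_left, crs_self]; norm_num) (by rw [crs_neg_left, hG31]; linarith)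
          (by rw [sub_self]; simp [crs]) hint
        rw [crs_neg_left, hval31] at this
        linarith
  have hABne : crs (z₁ - z₀) (z₂ - z₀) ≠ 0 := by
    rcases horient with ⟨h, _, _⟩ | ⟨h, _, _⟩ <;> [exact h.ne'; exact h.ne]
  have hBCne : crs (z₂ - z₀) (z₃ - z₀) ≠ 0 := by
    rcases horient with ⟨_, h, _⟩ | ⟨_, h, _⟩ <;> [exact h.ne'; exact h.ne]
  have hCAne : crs (z₃ - z₀) (z₁ - z₀) ≠ 0 := by
    rcases horient with ⟨_, _, h⟩ | ⟨_, _, h⟩ <;> [exact h.ne'; exact h.ne]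
  obtain ⟨s₁, t₁, hs₁, ht₁, hu₁⟩ := coords z₀ z₁ z₂ hABne hw₁
  obtain ⟨s₂, t₂, hs₂, ht₂, hu₂⟩ := coords z₀ z₂ z₃ hBCne hw₂
  obtain ⟨s₃, t₃, hs₃, ht₃, hu₃⟩ := coords z₀ z₃ z₁ hCAne hw₃
  -- distinctness of critical points
  have hsame1 : 0 < crs (z₁ - z₀) (z₂ - z₀) * crs (z₂ - z₀) (z₃ - z₀) := by
    rcases horient with ⟨h1, h2, _⟩ | ⟨h1, h2, _⟩ <;> nlinarith
  have hsame2 : 0 < crs (z₂ - z₀) (z₃ - z₀) * crs (z₃ - z₀) (z₁ - z₀) := by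
    rcases horient with ⟨_, h2, h3⟩ | ⟨_, h2, h3⟩ <;> nlinarith
  have hsame3 : 0 < crs (z₃ - z₀) (z₁ - z₀) * crs (z₁ - z₀) (z₂ - z₀) := by
    rcases horient with ⟨h1, _, h3⟩ | ⟨h1, _, h3⟩ <;> nlinarith
  have hw12 : w₁ ≠ w₂ := by
    intro h
    have heq : (s₁ : ℂ) * (z₁ - z₀) + (t₁ : ℂ) * (z₂ - z₀)
        = (s₂ : ℂ) * (z₂ - z₀) + (t₂ : ℂ) * (z₃ - z₀) := by
      rw [← hu₁, ← hu₂, h]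
    have hcB := congrArg (fun v => crs (z₂ - z₀) v) heq
    simp only [crs_comb] at hcB
    rw [crs_self] at hcB
    have e1 : crs (z₂ - z₀) (z₁ - z₀) = - crs (z₁ - z₀) (z₂ - z₀) := by
      rw [crs_anti]
    rw [e1] at hcB
    have hlin : s₁ * crs (z₁ - z₀) (z₂ - z₀) + t₂ * crs (z₂ - z₀) (z₃ - z₀) = 0 := by
      linarith
    have h3 : s₁ * (crs (z₁ - z₀) (z₂ - z₀)) ^ 2
        + t₂ * (crs (z₁ - z₀) (z₂ - z₀) * crs (z₂ - z₀) (z₃ - z₀)) = 0 := by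
      linear_combination crs (z₁ - z₀) (z₂ - z₀) * hlin
    linarith [mul_nonneg hs₁.le (sq_nonneg (crs (z₁ - z₀) (z₂ - z₀))), mul_pos ht₂ hsame1]
  have hw23 : w₂ ≠ w₃ := by
    intro h
    have heq : (s₂ : ℂ) * (z₂ - z₀) + (t₂ : ℂ) * (z₃ - z₀)
        = (s₃ : ℂ) * (z₃ - z₀) + (t₃ : ℂ) * (z₁ - z₀) := by
      rw [← hu₂, ← hu₃, h]
    have hcB := congrArg (fun v => crs (z₃ - z₀) v) heq
    simp only [crs_comb] at hcB
    rw [crs_self] at hcB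
    have e1 : crs (z₃ - z₀) (z₂ - z₀) = - crs (z₂ - z₀) (z₃ - z₀) := by
      rw [crs_anti]
    rw [e1] at hcB
    have hlin : s₂ * crs (z₂ - z₀) (z₃ - z₀) + t₃ * crs (z₃ - z₀) (z₁ - z₀) = 0 := by
      linarith
    have h3 : s₂ * (crs (z₂ - z₀) (z₃ - z₀)) ^ 2
        + t₃ * (crs (z₂ - z₀) (z₃ - z₀) * crs (z₃ - z₀) (z₁ - z₀)) = 0 := by
      linear_combination crs (z₂ - z₀) (z₃ - z₀) * hlin
    linarith [mul_nonneg hs₂.le (sq_nonneg (crs (z₂ - z₀) (z₃ - z₀))), mul_pos ht₃ hsame2]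
  have hw13 : w₁ ≠ w₃ := by
    intro h
    have heq : (s₁ : ℂ) * (z₁ - z₀) + (t₁ : ℂ) * (z₂ - z₀)
        = (s₃ : ℂ) * (z₃ - z₀) + (t₃ : ℂ) * (z₁ - z₀) := by
      rw [← hu₁, ← hu₃, h]
    have hcB := congrArg (fun v => crs (z₁ - z₀) v) heq
    simp only [crs_comb] at hcB
    rw [crs_self] at hcB
    have e1 : crs (z₁ - z₀) (z₃ - z₀) = - crs (z₃ - z₀) (z₁ - z₀) := by
      rw [crs_anti]
    rw [e1] at hcB
    have hlin : t₁ * crs (z₁ - z₀) (z₂ - z₀) + s₃ * crs (z₃ - z₀) (z₁ - z₀) = 0 := by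
      linarith
    have h3 : t₁ * (crs (z₁ - z₀) (z₂ - z₀)) ^ 2
        + s₃ * (crs (z₃ - z₀) (z₁ - z₀) * crs (z₁ - z₀) (z₂ - z₀)) = 0 := by
      linear_combination crs (z₁ - z₀) (z₂ - z₀) * hlin
    linarith [mul_nonneg ht₁.le (sq_nonneg (crs (z₁ - z₀) (z₂ - z₀))), mul_pos hs₃ hsame3]
  -- the product identity
  have hkp := key_prod z₀ z₁ z₂ z₃ w₁ w₂ w₃ hw12 hw13 hw23 p hp he₁ he₂ he₃
  have hprod : (z₁ - z₀) * (z₂ - z₀) * (z₃ - z₀)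
      = 4 * ((w₁ - z₀) * (w₂ - z₀) * (w₃ - z₀)) := by
    linear_combination - hkp
  rcases horient with ⟨hAB, hBC, hCA⟩ | ⟨hAB, hBC, hCA⟩
  · exact core (z₁ - z₀) (z₂ - z₀) (z₃ - z₀) (w₁ - z₀) (w₂ - z₀) (w₃ - z₀)
      s₁ t₁ s₂ t₂ s₃ t₃ hs₁ ht₁ hs₂ ht₂ hs₃ ht₃ hAB hBC hCA hu₁ hu₂ hu₃ hprod
  · -- conjugate everything
    have hAB' : 0 < crs ((starRingEnd ℂ) (z₁ - z₀)) ((starRingEnd ℂ) (z₂ - z₀)) := by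
      rw [crs_conj]; linarith
    have hBC' : 0 < crs ((starRingEnd ℂ) (z₂ - z₀)) ((starRingEnd ℂ) (z₃ - z₀)) := by
      rw [crs_conj]; linarith
    have hCA' : 0 < crs ((starRingEnd ℂ) (z₃ - z₀)) ((starRingEnd ℂ) (z₁ - z₀)) := by
      rw [crs_conj]; linarith
    have hu₁' : (starRingEnd ℂ) (w₁ - z₀) = (s₁ : ℂ) * (starRingEnd ℂ) (z₁ - z₀)
        + (t₁ : ℂ) * (starRingEnd ℂ) (z₂ - z₀) := by
      rw [hu₁, map_add, map_mul, map_mul, Complex.conj_ofReal, Complex.conj_ofReal]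
    have hu₂' : (starRingEnd ℂ) (w₂ - z₀) = (s₂ : ℂ) * (starRingEnd ℂ) (z₂ - z₀)
        + (t₂ : ℂ) * (starRingEnd ℂ) (z₃ - z₀) := by
      rw [hu₂, map_add, map_mul, map_mul, Complex.conj_ofReal, Complex.conj_ofReal]
    have hu₃' : (starRingEnd ℂ) (w₃ - z₀) = (s₃ : ℂ) * (starRingEnd ℂ) (z₃ - z₀)
        + (t₃ : ℂ) * (starRingEnd ℂ) (z₁ - z₀) := by
      rw [hu₃, map_add, map_mul, map_mul, Complex.conj_ofReal, Complex.conj_ofReal]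
    have hprod' : (starRingEnd ℂ) (z₁ - z₀) * (starRingEnd ℂ) (z₂ - z₀)
          * (starRingEnd ℂ) (z₃ - z₀)
        = 4 * ((starRingEnd ℂ) (w₁ - z₀) * (starRingEnd ℂ) (w₂ - z₀)
          * (starRingEnd ℂ) (w₃ - z₀)) := by
      rw [← map_mul, ← map_mul, hprod, map_mul, map_mul, map_mul, map_ofNat]
    exact core ((starRingEnd ℂ) (z₁ - z₀)) ((starRingEnd ℂ) (z₂ - z₀))
      ((starRingEnd ℂ) (z₃ - z₀)) ((starRingEnd ℂ) (w₁ - z₀)) ((starRingEnd ℂ) (w₂ - z₀))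
      ((starRingEnd ℂ) (w₃ - z₀))
      s₁ t₁ s₂ t₂ s₃ t₃ hs₁ ht₁ hs₂ ht₂ hs₃ ht₃ hAB' hBC' hCA' hu₁' hu₂' hu₃' hprod'
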